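/- Let q ∈ L¹[0,1] be real-valued, α, β real constants not both zero, and suppose the first eigenvalue λ₀ of the anti-periodic problem -y''+qy=λy, y(1)=-y(0), y'(1)=-y'(0) satisfies λ₀ = π² + (2/(α²+β²)) ∫₀¹ q(x)(α sin πx + β cos πx)² dx. Then q(x) = (2/(α²+β²)) ∫₀¹ q(s)(α sin πs + β cos πs)² ds almost everywhere. -/

import Mathlib

open MeasureTheory intervalIntegral Complex
open scoped ContDiff
set_option maxHeartbeats 2000000

/-- The (real-valued) Rayleigh quotient of `y` for the operator `-y'' + q y` on `[0,1]`. -/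
noncomputable def rayleighQuotientR (q : ℝ → ℝ) (y : ℝ → ℂ) : ℝ :=
  (∫ x in (0:ℝ)..1,
      ((-(starRingEnd ℂ) (y x) * deriv (deriv y) x).re + q x * ‖y x‖^2)) /
  (∫ x in (0:ℝ)..1, ‖y x‖^2)

def AntiPeriodicBC (y : ℝ → ℂ) : Prop := y 1 = -y 0 ∧ deriv y 1 = -deriv y 0

def IsEigenfunction (q : ℝ → ℝ) (lam : ℝ) (y : ℝ → ℂ) : Prop :=
  ContDiff ℝ 2 y ∧ (∃ x ∈ Set.Icc (0:ℝ) 1, y x ≠ 0) ∧ AntiPeriodicBC y ∧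
  ∀ᵐ x, x ∈ Set.Icc (0:ℝ) 1 → -deriv (deriv y) x + (q x : ℂ) * y x = (lam : ℂ) * y x

def IsEigenvalue (q : ℝ → ℝ) (lam : ℝ) : Prop := ∃ y, IsEigenfunction q lam y

def IsFirstEigenvalue (q : ℝ → ℝ) (lam0 : ℝ) : Prop :=
  IsEigenvalue q lam0 ∧ ∀ lam, IsEigenvalue q lam → lam0 ≤ lam

/-! ### Auxiliary material -/

noncomputable def yb (α β : ℝ) (x : ℝ) : ℝ := α * Real.sin (Real.pi*x) + β * Real.cos (Real.pi*x)
noncomputable def yd (α β : ℝ) (x : ℝ) : ℝ :=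
  α * (Real.cos (Real.pi*x) * Real.pi) - β * (Real.sin (Real.pi*x) * Real.pi)

lemma hasDerivAt_pix (c x : ℝ) : HasDerivAt (fun y : ℝ => c * y) c x := by
  simpa using (hasDerivAt_id x).const_mul c

lemma hasDerivAt_sin_pix (c x : ℝ) :
    HasDerivAt (fun x : ℝ => Real.sin (c*x)) (Real.cos (c*x) * c) x :=
  (Real.hasDerivAt_sin (c*x)).comp x (hasDerivAt_pix c x)

lemma hasDerivAt_cos_pix (c x : ℝ) :
    HasDerivAt (fun x : ℝ => Real.cos (c*x)) (-Real.sin (c*x) * c) x :=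
  (Real.hasDerivAt_cos (c*x)).comp x (hasDerivAt_pix c x)

lemma hasDerivAt_yb (α β x : ℝ) : HasDerivAt (yb α β) (yd α β x) x := by
  have := ((hasDerivAt_sin_pix Real.pi x).const_mul α).add
    ((hasDerivAt_cos_pix Real.pi x).const_mul β)
  have h2 : HasDerivAt (yb α β)
      (α * (Real.cos (Real.pi*x) * Real.pi) + β * (-Real.sin (Real.pi*x) * Real.pi)) x := this
  convert h2 using 1
  unfold yd; ring

lemma hasDerivAt_yd (α β x : ℝ) :
    HasDerivAt (yd α β) (-(Real.pi^2) * yb α β x) x := by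
  have := (((hasDerivAt_cos_pix Real.pi x).mul_const Real.pi).const_mul α).sub
    (((hasDerivAt_sin_pix Real.pi x).mul_const Real.pi).const_mul β)
  have h2 : HasDerivAt (yd α β)
      (α * (-Real.sin (Real.pi*x) * Real.pi * Real.pi) - β * (Real.cos (Real.pi*x) * Real.pi * Real.pi)) x := this
  convert h2 using 1
  unfold yb; ring

lemma contDiff_yb (α β : ℝ) : ContDiff ℝ 2 (yb α β) := by
  unfold yb
  exact ((Real.contDiff_sin.comp (contDiff_const.mul contDiff_id)).const_smul α).add
    ((Real.contDiff_cos.comp (contDiff_const.mul contDiff_id)).const_smul β)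

lemma continuous_yb (α β : ℝ) : Continuous (yb α β) := by
  unfold yb; continuity

lemma continuous_yd (α β : ℝ) : Continuous (yd α β) := by
  unfold yd; continuity

lemma intJ (α β : ℝ) : ∫ x in (0:ℝ)..1, (yb α β x)^2 = (α^2+β^2)/2 := by
  have hπ : Real.pi ≠ 0 := Real.pi_ne_zero
  have hd : ∀ x ∈ Set.uIcc (0:ℝ) 1, HasDerivAt
      (fun x => (α^2+β^2)*x/2 + (β^2-α^2)*Real.sin (2*Real.pi*x)/(4*Real.pi)
        - α*β*Real.cos (2*Real.pi*x)/(2*Real.pi)) ((yb α β x)^2) x := by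
    intro x _
    have hx : HasDerivAt (fun x : ℝ => (α^2+β^2)*x/2) ((α^2+β^2)/2) x := by
      simpa using (hasDerivAt_pix (α^2+β^2) x).div_const 2
    have h := (hx.add (((hasDerivAt_sin_pix (2*Real.pi) x).const_mul (β^2-α^2)).div_const (4*Real.pi))).sub
      (((hasDerivAt_cos_pix (2*Real.pi) x).const_mul (α*β)).div_const (2*Real.pi))
    refine h.congr_deriv (Eq.symm ?_)
    have hcos2 : Real.cos (2*Real.pi*x) = Real.cos (Real.pi*x)^2 - Real.sin (Real.pi*x)^2 := by
      rw [show 2*Real.pi*x = Real.pi*x + Real.pi*x by ring, Real.cos_add]; ring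
    have hsin2 : Real.sin (2*Real.pi*x) = 2 * Real.sin (Real.pi*x) * Real.cos (Real.pi*x) := by
      rw [show 2*Real.pi*x = Real.pi*x + Real.pi*x by ring, Real.sin_add]; ring
    have hpy : Real.sin (Real.pi*x)^2 + Real.cos (Real.pi*x)^2 = 1 := Real.sin_sq_add_cos_sq _
    rw [hcos2, hsin2]
    unfold yb
    field_simp
    linear_combination ((α^2+β^2)*4) * hpy
  rw [intervalIntegral.integral_eq_sub_of_hasDerivAt hd
    (Continuous.intervalIntegrable (by unfold yb; continuity) 0 1)]
  norm_num [Real.sin_two_pi, Real.cos_two_pi]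

lemma yb_ae_ne (α β : ℝ) (hαβ : ¬(α = 0 ∧ β = 0)) :
    ∀ᵐ x : ℝ, ¬(x ∈ Set.Icc (0:ℝ) 1 ∧ yb α β x = 0) := by
  have hr : 0 < α^2 + β^2 := by
    rcases not_and_or.mp hαβ with h | h
    · positivity
    · positivity
  set r := Real.sqrt (α^2+β^2) with hrdef
  have hr0 : 0 < r := Real.sqrt_pos.mpr hr
  have hsub : ∀ v : ℝ, Set.Subsingleton {x : ℝ | x ∈ Set.Icc (0:ℝ) 1 ∧ Real.cos (Real.pi * x) = v} := by
    intro v x hx y hy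
    have hπ := Real.pi_pos
    have hmx : Real.pi * x ∈ Set.Icc 0 Real.pi :=
      ⟨by nlinarith [hx.1.1], by nlinarith [hx.1.2]⟩
    have hmy : Real.pi * y ∈ Set.Icc 0 Real.pi :=
      ⟨by nlinarith [hy.1.1], by nlinarith [hy.1.2]⟩
    have := Real.strictAntiOn_cos.injOn hmx hmy (by rw [hx.2, hy.2])
    have : x = y := by
      have := mul_left_cancel₀ (ne_of_gt hπ) this
      exact this
    exact this
  have hcover : {x : ℝ | x ∈ Set.Icc (0:ℝ) 1 ∧ yb α β x = 0} ⊆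
      {x : ℝ | x ∈ Set.Icc (0:ℝ) 1 ∧ Real.cos (Real.pi * x) = α/r} ∪
      {x : ℝ | x ∈ Set.Icc (0:ℝ) 1 ∧ Real.cos (Real.pi * x) = -(α/r)} := by
    intro x hx
    have h0 : α * Real.sin (Real.pi*x) + β * Real.cos (Real.pi*x) = 0 := hx.2
    have hpy : Real.sin (Real.pi*x)^2 + Real.cos (Real.pi*x)^2 = 1 := Real.sin_sq_add_cos_sq _
    have h2 : α^2 * Real.sin (Real.pi*x)^2 = β^2 * Real.cos (Real.pi*x)^2 := by
      linear_combination (α*Real.sin (Real.pi*x) - β*Real.cos (Real.pi*x)) * h0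
    have hsq : (α^2+β^2) * Real.cos (Real.pi*x)^2 = α^2 := by
      linear_combination α^2*hpy - h2
    have hr2 : r^2 = α^2+β^2 := Real.sq_sqrt hr.le
    have hfac : (r * Real.cos (Real.pi*x) - α) * (r * Real.cos (Real.pi*x) + α) = 0 := by
      linear_combination (Real.cos (Real.pi*x))^2 * hr2 + hsq
    rcases mul_eq_zero.mp hfac with h | h
    · left
      refine ⟨hx.1, ?_⟩
      field_simp
      linarith
    · right
      refine ⟨hx.1, ?_⟩
      field_simp
      linarith
  have hcnt : Set.Countable {x : ℝ | x ∈ Set.Icc (0:ℝ) 1 ∧ yb α β x = 0} :=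
    Set.Countable.mono hcover (((hsub _).countable).union ((hsub _).countable))
  filter_upwards [hcnt.ae_notMem volume] with x hx
  exact fun h => hx h
lemma re_helper (a b : ℝ) : (-(starRingEnd ℂ) ((a:ℝ):ℂ) * ((b:ℝ):ℂ)).re = -(a*b) := by
  rw [Complex.conj_ofReal, ← Complex.ofReal_neg, ← Complex.ofReal_mul, Complex.ofReal_re]
  exact neg_mul a b

lemma abs_helper (a : ℝ) : (‖((a:ℝ):ℂ)‖)^2 = a^2 := by
  rw [Complex.norm_real, Real.norm_eq_abs]; exact sq_abs a

lemma key (q : ℝ → ℝ) (hq : IntegrableOn q (Set.Icc (0:ℝ) 1))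
    (α β : ℝ) (hr : 0 < α^2 + β^2) (lam0 : ℝ)
    (hvar : ∀ y : ℝ → ℂ, ContDiff ℝ 2 y → (∃ x ∈ Set.Icc (0:ℝ) 1, y x ≠ 0) →
      AntiPeriodicBC y → lam0 ≤ rayleighQuotientR q y)
    (heq : lam0 = Real.pi^2 + (2 / (α^2 + β^2)) *
      ∫ x in (0:ℝ)..1, q x * (α * Real.sin (Real.pi * x) + β * Real.cos (Real.pi * x))^2)
    (g : ℝ → ℝ) (hg : ContDiff ℝ ∞ g) (hgs : tsupport g ⊆ Set.Ioo 0 1) :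
    (∫ x in (0:ℝ)..1, q x * (yb α β x * g x)) =
      ((2 / (α^2 + β^2)) * ∫ x in (0:ℝ)..1, q x * (yb α β x)^2) *
        ∫ x in (0:ℝ)..1, yb α β x * g x := by
  have hπ := Real.pi_pos
  have hle1 : (1 : WithTop ℕ∞) ≤ ∞ := by
    rw [show ((1:WithTop ℕ∞)) = (((1:ℕ∞)):WithTop ℕ∞) by rfl]
    exact WithTop.coe_le_coe.mpr le_top
  have hle2 : (2 : WithTop ℕ∞) ≤ ∞ := by
    rw [show ((2:WithTop ℕ∞)) = (((2:ℕ∞)):WithTop ℕ∞) by rfl]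
    exact WithTop.coe_le_coe.mpr le_top
  -- regularity of g
  have hgc : Continuous g := hg.continuous
  have hg1 : ContDiff ℝ ∞ (deriv g) := (contDiff_infty_iff_deriv.mp hg).2
  have hdgc : Continuous (deriv g) := hg1.continuous
  have hg2 : ContDiff ℝ ∞ (deriv (deriv g)) := (contDiff_infty_iff_deriv.mp hg1).2
  have hddgc : Continuous (deriv (deriv g)) := hg2.continuous
  have hgd : ∀ x, HasDerivAt g (deriv g x) x := fun x => (hg.differentiable (by simp) x).hasDerivAt
  have hdgd : ∀ x, HasDerivAt (deriv g) (deriv (deriv g) x) x :=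
    fun x => (hg1.differentiable (by simp) x).hasDerivAt
  -- boundary values
  have ht0 : (0:ℝ) ∉ tsupport g := fun h => absurd (hgs h).1 (by norm_num)
  have ht1 : (1:ℝ) ∉ tsupport g := fun h => absurd (hgs h).2 (by norm_num)
  have g0 : g 0 = 0 := image_eq_zero_of_notMem_tsupport ht0
  have g1 : g 1 = 0 := image_eq_zero_of_notMem_tsupport ht1
  have dg0 : deriv g 0 = 0 := by
    by_contra h
    exact ht0 (support_deriv_subset (Function.mem_support.mpr h))
  have dg1 : deriv g 1 = 0 := by
    by_contra h
    exact ht1 (support_deriv_subset (Function.mem_support.mpr h))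
  -- integrability
  have hqI : IntervalIntegrable q volume 0 1 :=
    ⟨hq.mono_set Set.Ioc_subset_Icc_self, by
      rw [Set.Ioc_eq_empty (by norm_num : ¬(1:ℝ) < 0)]; exact integrableOn_empty⟩
  have hybc := continuous_yb α β
  have hydc := continuous_yd α β
  -- abbreviations
  set K := ∫ x in (0:ℝ)..1, q x * (α * Real.sin (Real.pi * x) + β * Real.cos (Real.pi * x))^2 with hK
  have hKyb : (∫ x in (0:ℝ)..1, q x * (yb α β x)^2) = K := by rw [hK]; rfl
  set E := ∫ x in (0:ℝ)..1, yb α β x * g x with hE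
  set G := ∫ x in (0:ℝ)..1, q x * (yb α β x * g x) with hG
  set H := ∫ x in (0:ℝ)..1, (g x)^2 with hH
  have hH0 : 0 ≤ H := by
    rw [hH]; exact intervalIntegral.integral_nonneg (by norm_num) (fun x _ => sq_nonneg _)
  -- integrable pieces
  have iq_yb2 : IntervalIntegrable (fun x => q x * (yb α β x)^2) volume 0 1 :=
    hqI.mul_continuousOn ((hybc.pow 2).continuousOn)
  have iq_ybg : IntervalIntegrable (fun x => q x * (yb α β x * g x)) volume 0 1 :=
    hqI.mul_continuousOn ((hybc.mul hgc).continuousOn)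
  have iq_g2 : IntervalIntegrable (fun x => q x * (g x)^2) volume 0 1 :=
    hqI.mul_continuousOn ((hgc.pow 2).continuousOn)
  have c_yb2 : Continuous (fun x => Real.pi^2*(yb α β x)^2) := continuous_const.mul (hybc.pow 2)
  have c_ybg : Continuous (fun x => Real.pi^2*(yb α β x*g x)) := continuous_const.mul (hybc.mul hgc)
  have i_f0 : IntervalIntegrable (fun x => Real.pi^2*(yb α β x)^2 + q x*(yb α β x)^2) volume 0 1 :=
    (Continuous.intervalIntegrable c_yb2 0 1).add iq_yb2
  have i_f1 : IntervalIntegrable (fun x => Real.pi^2*(yb α β x*g x) - yb α β x*deriv (deriv g) x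
      + 2*(q x*(yb α β x*g x))) volume 0 1 :=
    ((Continuous.intervalIntegrable c_ybg 0 1).sub
      (Continuous.intervalIntegrable (hybc.mul hddgc) 0 1)).add (iq_ybg.const_mul 2)
  have i_f2 : IntervalIntegrable (fun x => -(g x*deriv (deriv g) x) + q x*(g x)^2) volume 0 1 :=
    ((Continuous.intervalIntegrable (hgc.mul hddgc) 0 1).neg).add iq_g2
  -- integration by parts
  have parts1 : (∫ x in (0:ℝ)..1, yd α β x * deriv g x) = Real.pi^2 * E := by
    have h := intervalIntegral.integral_mul_deriv_eq_deriv_mul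
      (u := yd α β) (u' := fun x => -(Real.pi^2) * yb α β x) (v := g) (v' := deriv g)
      (fun x _ => hasDerivAt_yd α β x) (fun x _ => hgd x)
      (Continuous.intervalIntegrable (continuous_const.mul hybc) 0 1)
      (hdgc.intervalIntegrable 0 1)
    rw [g0, g1, mul_zero, mul_zero, sub_zero, zero_sub] at h
    have e : (fun x => -(Real.pi^2) * yb α β x * g x)
        = fun x => -(Real.pi^2) * (yb α β x * g x) := by funext x; ring
    rw [e, intervalIntegral.integral_const_mul] at h
    rw [h, hE]; ring
  have parts2 : (∫ x in (0:ℝ)..1, yb α β x * deriv (deriv g) x) = -(Real.pi^2) * E := by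
    have h := intervalIntegral.integral_mul_deriv_eq_deriv_mul
      (u := yb α β) (u' := yd α β) (v := deriv g) (v' := deriv (deriv g))
      (fun x _ => hasDerivAt_yb α β x) (fun x _ => hdgd x)
      (hydc.intervalIntegrable 0 1) (hddgc.intervalIntegrable 0 1)
    rw [dg0, dg1, mul_zero, mul_zero, sub_zero, zero_sub, parts1] at h
    rw [h]; ring
  -- the split numerator at order 0 and 1
  have hI0 : (∫ x in (0:ℝ)..1, (Real.pi^2*(yb α β x)^2 + q x*(yb α β x)^2))
      = Real.pi^2*((α^2+β^2)/2) + K := by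
    rw [intervalIntegral.integral_add (Continuous.intervalIntegrable c_yb2 0 1) iq_yb2,
      intervalIntegral.integral_const_mul, intJ, hKyb]
  have hI1 : (∫ x in (0:ℝ)..1, (Real.pi^2*(yb α β x*g x) - yb α β x*deriv (deriv g) x
      + 2*(q x*(yb α β x*g x)))) = 2*Real.pi^2*E + 2*G := by
    rw [intervalIntegral.integral_add ((Continuous.intervalIntegrable c_ybg 0 1).sub
        (Continuous.intervalIntegrable (u := fun x => yb α β x * deriv (deriv g) x) (hybc.mul hddgc) 0 1)) (iq_ybg.const_mul 2),
      intervalIntegral.integral_sub (Continuous.intervalIntegrable c_ybg 0 1)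
        (Continuous.intervalIntegrable (u := fun x => yb α β x * deriv (deriv g) x) (hybc.mul hddgc) 0 1),
      intervalIntegral.integral_const_mul, intervalIntegral.integral_const_mul, parts2,
      ← hE, ← hG]
    ring
  set a := 2*Real.pi^2*E + 2*G - lam0*(2*E) with ha
  set b := (∫ x in (0:ℝ)..1, (-(g x*deriv (deriv g) x) + q x*(g x)^2)) - lam0*H with hb
  have hJ0 : lam0 * ((α^2+β^2)/2) = Real.pi^2*((α^2+β^2)/2) + K := by
    rw [heq]; field_simp
  have hε : (0:ℝ) < ((α^2+β^2)/2/2) / (|2*E| + 1) := by positivity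
  set ε := ((α^2+β^2)/2/2) / (|2*E| + 1) with hεdef
  have main : ∀ t : ℝ, |t| < ε → 0 ≤ a*t + b*t^2 := by
    intro t ht
    set Z : ℝ → ℂ := fun x => ((yb α β x + t * g x : ℝ) : ℂ) with hZ
    have hDen : (∫ x in (0:ℝ)..1, (yb α β x + t*g x)^2)
        = (α^2+β^2)/2 + (t*(2*E) + t^2*H) := by
      have e : (fun x => (yb α β x + t*g x)^2)
          = fun x => (yb α β x)^2 + (t*(2*(yb α β x*g x)) + t^2*(g x)^2) := by
        funext x; ring
      have c2yg : Continuous (fun x => 2*(yb α β x * g x)) := continuous_const.mul (hybc.mul hgc)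
      rw [e, intervalIntegral.integral_add (Continuous.intervalIntegrable (u := fun x => (yb α β x)^2) (hybc.pow 2) 0 1)
          ((((Continuous.intervalIntegrable c2yg 0 1).const_mul t)).add
            ((Continuous.intervalIntegrable (u := fun x => (g x)^2) (hgc.pow 2) 0 1).const_mul (t^2))),
        intervalIntegral.integral_add ((Continuous.intervalIntegrable c2yg 0 1).const_mul t)
          ((Continuous.intervalIntegrable (u := fun x => (g x)^2) (hgc.pow 2) 0 1).const_mul (t^2)),
        intervalIntegral.integral_const_mul, intervalIntegral.integral_const_mul,
        intervalIntegral.integral_const_mul, intJ, ← hE, ← hH]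
    have hDpos : (0:ℝ) < (α^2+β^2)/2 + (t*(2*E) + t^2*H) := by
      have h1 : |t * (2*E)| ≤ ε * (|2*E| + 1) := by
        rw [abs_mul]
        exact mul_le_mul ht.le (le_add_of_nonneg_right zero_le_one) (abs_nonneg _) hε.le
      have h2 : ε * (|2*E|+1) = (α^2+β^2)/2/2 := by
        rw [hεdef]
        field_simp
      have h3 : (0:ℝ) ≤ t^2*H := mul_nonneg (sq_nonneg t) hH0
      have h4 := neg_abs_le (t*(2*E))
      linarith
    have hNum : (∫ x in (0:ℝ)..1, (-((yb α β x + t*g x) * (-(Real.pi^2)*yb α β x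
          + t*deriv (deriv g) x)) + q x * (yb α β x + t*g x)^2))
        = (Real.pi^2*((α^2+β^2)/2) + K) + (t*(2*Real.pi^2*E + 2*G) + t^2*(b + lam0*H)) := by
      have e : (fun x => -((yb α β x + t*g x) * (-(Real.pi^2)*yb α β x + t*deriv (deriv g) x))
            + q x * (yb α β x + t*g x)^2)
          = fun x => (Real.pi^2*(yb α β x)^2 + q x*(yb α β x)^2)
            + (t*(Real.pi^2*(yb α β x*g x) - yb α β x*deriv (deriv g) x + 2*(q x*(yb α β x*g x)))
              + t^2*(-(g x*deriv (deriv g) x) + q x*(g x)^2)) := by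
        funext x; ring
      rw [e, intervalIntegral.integral_add i_f0 ((i_f1.const_mul t).add (i_f2.const_mul (t^2))),
        intervalIntegral.integral_add (i_f1.const_mul t) (i_f2.const_mul (t^2)),
        intervalIntegral.integral_const_mul, intervalIntegral.integral_const_mul, hI0, hI1]
      rw [hb]; ring
    have hZc : ContDiff ℝ 2 Z := by
      have h1 : ContDiff ℝ 2 (fun x => yb α β x + t * g x) :=
        (contDiff_yb α β).add (contDiff_const.mul (hg.of_le hle2))
      exact Complex.ofRealCLM.contDiff.comp h1
    have hderZ : deriv Z = fun x => ((yd α β x + t*deriv g x : ℝ):ℂ) :=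
      funext fun x => (((hasDerivAt_yb α β x).add ((hgd x).const_mul t)).ofReal_comp).deriv
    have hdd : deriv (deriv Z) = fun x => ((-(Real.pi^2)*yb α β x + t*deriv (deriv g) x : ℝ) : ℂ) := by
      rw [hderZ]
      exact funext fun x => (((hasDerivAt_yd α β x).add ((hdgd x).const_mul t)).ofReal_comp).deriv
    have hZne : ∃ x ∈ Set.Icc (0:ℝ) 1, Z x ≠ 0 := by
      by_contra hcon
      push_neg at hcon
      have heqon : Set.EqOn (fun x => (yb α β x + t*g x)^2) (fun _ => (0:ℝ)) (Set.uIcc 0 1) := by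
        intro x hx
        have hx' : x ∈ Set.Icc (0:ℝ) 1 := by rwa [Set.uIcc_of_le (by norm_num)] at hx
        have h0 : yb α β x + t*g x = 0 := by
          have hz0 := hcon x hx'
          simp only [hZ] at hz0
          exact_mod_cast hz0
        simp [h0]
      have h0 := intervalIntegral.integral_congr (μ := volume) heqon
      rw [hDen] at h0
      simp at h0
      linarith
    have hZbc : AntiPeriodicBC Z := by
      constructor
      · show ((yb α β 1 + t*g 1 : ℝ) : ℂ) = -((yb α β 0 + t*g 0 : ℝ) : ℂ)
        rw [g0, g1]
        have h1 : yb α β 1 = -β := by simp [yb, Real.sin_pi, Real.cos_pi]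
        have h0 : yb α β 0 = β := by simp [yb]
        rw [h1, h0]; push_cast; ring
      · rw [hderZ]
        show ((yd α β 1 + t*deriv g 1 : ℝ) : ℂ) = -((yd α β 0 + t*deriv g 0 : ℝ) : ℂ)
        rw [dg0, dg1]
        have h1 : yd α β 1 = -(α*Real.pi) := by simp [yd, Real.sin_pi, Real.cos_pi]
        have h0 : yd α β 0 = α*Real.pi := by simp [yd]
        rw [h1, h0]; push_cast; ring
    have hRQ : rayleighQuotientR q Z =
        (∫ x in (0:ℝ)..1, (-((yb α β x + t*g x) * (-(Real.pi^2)*yb α β x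
          + t*deriv (deriv g) x)) + q x * (yb α β x + t*g x)^2)) /
        (∫ x in (0:ℝ)..1, (yb α β x + t*g x)^2) := by
      unfold rayleighQuotientR
      rw [hdd]
      congr 1
      · apply intervalIntegral.integral_congr
        intro x _
        simp only [hZ]
        rw [re_helper, abs_helper]
      · apply intervalIntegral.integral_congr
        intro x _
        simp only [hZ]
        rw [abs_helper]
    have hineq := hvar Z hZc hZne hZbc
    rw [hRQ, hDen, hNum, le_div_iff₀ hDpos] at hineq
    have key0 : a*t + b*t^2 =
        ((Real.pi^2*((α^2+β^2)/2) + K) + (t*(2*Real.pi^2*E + 2*G) + t^2*(b + lam0*H)))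
          - lam0 * ((α^2+β^2)/2 + (t*(2*E) + t^2*H)) := by
      rw [ha]; linear_combination hJ0
    rw [key0]
    linarith
  -- extract the linear coefficient
  have ha0 : a = 0 := by
    by_contra hane
    have habs : 0 < |a| := abs_pos.mpr hane
    set s := min (ε/2) (|a|/(2*(|b|+1))) with hs
    have hs0 : 0 < s := lt_min (by positivity) (by positivity)
    have hsε : s < ε := lt_of_le_of_lt (min_le_left _ _) (by linarith)
    have hb1 : (0:ℝ) < |b|+1 := by positivity
    have hsb : s*(|b|+1) ≤ |a|/2 := by
      have h5 : s ≤ |a|/(2*(|b|+1)) := min_le_right _ _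
      have h6 : s*(2*(|b|+1)) ≤ |a| := (le_div_iff₀ (by positivity)).mp h5
      nlinarith [h6]
    set t := if 0 < a then -s else s with htd
    have hts : |t| = s := by
      rw [htd]; split
      · rw [abs_neg, abs_of_pos hs0]
      · rw [abs_of_pos hs0]
    have h1 := main t (by rw [hts]; exact hsε)
    have hta : a*t = -(s*|a|) := by
      rw [htd]; split_ifs with h
      · rw [abs_of_pos h]; ring
      · rw [abs_of_neg (lt_of_le_of_ne (not_lt.mp h) hane)]; ring
    have ht2 : t^2 = s^2 := by rw [htd]; split_ifs <;> ring
    have hbt : b*t^2 ≤ s^2*|b| := by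
      rw [ht2]
      nlinarith [le_abs_self b, sq_nonneg s]
    nlinarith [mul_le_mul_of_nonneg_left hsb hs0.le, mul_pos hs0 habs]
  -- conclude
  rw [hKyb]
  rw [ha, heq] at ha0
  linear_combination ha0 / 2

/-- Yurko, Theorem 2(b): anti-periodic problem. If the first eigenvalue
`λ₀ = π² + (2/(α²+β²)) ∫₀¹ q (α sin πx + β cos πx)²`, with `(α,β) ≠ (0,0)`, then `q` is
a.e. equal to that weighted mean. -/
theorem ambarzumyan_antiperiodic (q : ℝ → ℝ)
    (hq : IntegrableOn q (Set.Icc (0:ℝ) 1))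
    (α β : ℝ) (hαβ : ¬(α = 0 ∧ β = 0))
    (lam0 : ℝ) (hfirst : IsFirstEigenvalue q lam0)
    (hvar : ∀ y : ℝ → ℂ, ContDiff ℝ 2 y → (∃ x ∈ Set.Icc (0:ℝ) 1, y x ≠ 0) →
      AntiPeriodicBC y → lam0 ≤ rayleighQuotientR q y)
    (heq : lam0 = Real.pi^2 + (2 / (α^2 + β^2)) *
      ∫ x in (0:ℝ)..1, q x * (α * Real.sin (Real.pi * x) + β * Real.cos (Real.pi * x))^2) :
    ∀ᵐ x, x ∈ Set.Icc (0:ℝ) 1 → q x = (2 / (α^2 + β^2)) *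
      ∫ s in (0:ℝ)..1, q s * (α * Real.sin (Real.pi * s) + β * Real.cos (Real.pi * s))^2 := by
  have hr : 0 < α^2 + β^2 := by
    rcases not_and_or.mp hαβ with h | h
    · positivity
    · positivity
  have hqI : IntervalIntegrable q volume 0 1 :=
    ⟨hq.mono_set Set.Ioc_subset_Icc_self, by
      rw [Set.Ioc_eq_empty (by norm_num : ¬(1:ℝ) < 0)]; exact integrableOn_empty⟩
  have hybc := continuous_yb α β
  set c := (2 / (α^2 + β^2)) *
      ∫ s in (0:ℝ)..1, q s * (α * Real.sin (Real.pi * s) + β * Real.cos (Real.pi * s))^2 with hc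
  set f : ℝ → ℝ := fun x => (q x - c) * yb α β x with hf
  have hfI : IntervalIntegrable f volume 0 1 :=
    (hqI.sub intervalIntegrable_const).mul_continuousOn hybc.continuousOn
  have hloc : LocallyIntegrableOn f (Set.Ioo 0 1) volume :=
    ((hfI.1).mono_set Set.Ioo_subset_Ioc_self).locallyIntegrableOn
  have hae : ∀ᵐ x, x ∈ Set.Ioo (0:ℝ) 1 → f x = 0 := by
    apply isOpen_Ioo.ae_eq_zero_of_integral_contDiff_smul_eq_zero hloc
    intro g hgsm hgcs hgsupp
    have hk := key q hq α β hr lam0 hvar heq g hgsm hgsupp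
    have h1 : (∫ x, g x • f x) = ∫ x in Set.Ioo (0:ℝ) 1, g x • f x :=
      (setIntegral_eq_integral_of_forall_compl_eq_zero (fun x hx => by
        rw [image_eq_zero_of_notMem_tsupport (fun h => hx (hgsupp h)), zero_smul])).symm
    have h2 : (∫ x in (0:ℝ)..1, g x * f x) = ∫ x in Set.Ioo (0:ℝ) 1, g x • f x := by
      rw [intervalIntegral.integral_of_le zero_le_one, MeasureTheory.integral_Ioc_eq_integral_Ioo]
      simp only [smul_eq_mul]
    have iq_ybg : IntervalIntegrable (fun x => q x * (yb α β x * g x)) volume 0 1 :=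
      hqI.mul_continuousOn ((hybc.mul hgsm.continuous).continuousOn)
    have hsplit : (∫ x in (0:ℝ)..1, g x * f x)
        = (∫ x in (0:ℝ)..1, q x * (yb α β x * g x))
          - c * ∫ x in (0:ℝ)..1, yb α β x * g x := by
      have e : (fun x => g x * f x)
          = fun x => q x * (yb α β x * g x) - c*(yb α β x * g x) := by
        funext x; rw [hf]; ring
      rw [e, intervalIntegral.integral_sub iq_ybg
        ((Continuous.intervalIntegrable (u := fun x => yb α β x * g x) (hybc.mul hgsm.continuous) 0 1).const_mul c),
        intervalIntegral.integral_const_mul]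
    have hcc : (∫ x in (0:ℝ)..1, q x * (yb α β x)^2)
        = ∫ s in (0:ℝ)..1, q s * (α * Real.sin (Real.pi * s) + β * Real.cos (Real.pi * s))^2 := rfl
    rw [h1.symm] at h2
    rw [← h2, hsplit, hk, hc, hcc]
    ring
  have h01 : ∀ᵐ x : ℝ, x ∉ ({0,1} : Set ℝ) :=
    (Set.toFinite ({0,1} : Set ℝ)).countable.ae_notMem volume
  filter_upwards [hae, yb_ae_ne α β hαβ, h01] with x h1 h2 h3 hx
  have hx0 : x ≠ 0 := fun h => h3 (by simp [h])
  have hx1 : x ≠ 1 := fun h => h3 (by simp [h])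
  have hIoo : x ∈ Set.Ioo (0:ℝ) 1 := ⟨hx.1.lt_of_ne (Ne.symm hx0), hx.2.lt_of_ne hx1⟩
  have hfx := h1 hIoo
  rw [hf] at hfx
  have hyb : yb α β x ≠ 0 := fun h => h2 ⟨hx, h⟩
  rcases mul_eq_zero.mp hfx with h | h
  · exact sub_eq_zero.mp h
  · exact absurd h hyb
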